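/- arXiv:2203.13346 — 4 statements merged into one kernel-verified Lean document; each statement's English description precedes it below -/
import Mathlib

section
/- Let H be a real inner product space, E : H → ℝ, T > 0, and let γ : ℝ → H solve the gradient flow of E on [0,T), with t ↦ ∇E(γ(t)) continuous on [0,T). Then for every t ∈ [0,T), ‖γ(t) − γ(0)‖ ≤ √( t · (E(γ(0)) − E(γ(t))) ). -/
open Set

open MeasureTheory intervalIntegral

/-- Distance estimate along a gradient flow:
`‖γ(t) − γ(0)‖ ≤ √(t · (E(γ(0)) − E(γ(t))))`. -/
theorem gradient_flow_distance_estimate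
    {H : Type*} [NormedAddCommGroup H] [InnerProductSpace ℝ H] [CompleteSpace H]
    (E : H → ℝ) (T : ℝ) (hT : 0 < T) (γ : ℝ → H) (g : ℝ → H)
    (hflow : ∀ t ∈ Ico (0 : ℝ) T,
      HasGradientAt E (g t) (γ t) ∧ HasDerivAt γ (-(g t)) t)
    (hcont : ContinuousOn g (Ico (0 : ℝ) T)) :
    ∀ t ∈ Ico (0 : ℝ) T,
      ‖γ t - γ 0‖ ≤ Real.sqrt (t * (E (γ 0) - E (γ t))) := by
  rintro t ⟨ht0, htT⟩
  have hsub : Icc (0:ℝ) t ⊆ Ico (0:ℝ) T := fun s hs => ⟨hs.1, lt_of_le_of_lt hs.2 htT⟩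
  have huIcc : uIcc (0:ℝ) t = Icc 0 t := uIcc_of_le ht0
  have hcg : ContinuousOn g (uIcc (0:ℝ) t) := huIcc ▸ hcont.mono hsub
  -- fundamental theorem of calculus for γ
  have hintγ : IntervalIntegrable (fun s => -(g s)) volume 0 t :=
    hcg.neg.intervalIntegrable
  have eq1 : ∫ s in (0:ℝ)..t, -(g s) = γ t - γ 0 :=
    integral_eq_sub_of_hasDerivAt (fun s hs => (hflow s (hsub (huIcc ▸ hs))).2) hintγ
  -- energy identity
  have hE : ∀ s ∈ uIcc (0:ℝ) t, HasDerivAt (fun u => E (γ u)) (-‖g s‖^2) s := by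
    intro s hs
    obtain ⟨h1, h2⟩ := hflow s (hsub (huIcc ▸ hs))
    have := h1.hasFDerivAt.comp_hasDerivAt s h2
    simpa [InnerProductSpace.toDual_apply_apply, inner_neg_right,
      real_inner_self_eq_norm_sq, Function.comp_def] using this
  have hcsq : ContinuousOn (fun s => -‖g s‖^2) (uIcc (0:ℝ) t) := by fun_prop
  have eq2 : ∫ s in (0:ℝ)..t, -‖g s‖^2 = E (γ t) - E (γ 0) :=
    integral_eq_sub_of_hasDerivAt hE hcsq.intervalIntegrable
  have eq3 : E (γ 0) - E (γ t) = ∫ s in (0:ℝ)..t, ‖g s‖^2 := by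
    rw [intervalIntegral.integral_neg] at eq2; linarith
  -- norm bound
  have hb1 : ‖γ t - γ 0‖ ≤ ∫ s in (0:ℝ)..t, ‖g s‖ := by
    rw [← eq1]
    calc ‖∫ s in (0:ℝ)..t, -(g s)‖ ≤ ∫ s in (0:ℝ)..t, ‖-(g s)‖ :=
          intervalIntegral.norm_integral_le_integral_norm ht0
      _ = ∫ s in (0:ℝ)..t, ‖g s‖ := by simp
  -- Cauchy–Schwarz on [0, t]
  set μ := volume.restrict (Ioc (0:ℝ) t) with hμ
  haveI hfin : IsFiniteMeasure μ := by
    constructor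
    rw [hμ, Measure.restrict_apply_univ, Real.volume_Ioc]
    exact ENNReal.ofReal_lt_top
  have hcgI : ContinuousOn g (Ioc (0:ℝ) t) :=
    (huIcc ▸ hcg).mono Ioc_subset_Icc_self
  have hms : AEStronglyMeasurable (fun s => ‖g s‖) μ :=
    hcgI.norm.aestronglyMeasurable measurableSet_Ioc
  have hI2 : Integrable (fun s => ‖g s‖^2) μ := by
    have : ContinuousOn (fun s => ‖g s‖^2) (Icc (0:ℝ) t) := by
      have := huIcc ▸ hcg; fun_prop
    exact (this.integrableOn_Icc).mono_set Ioc_subset_Icc_self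
  have hf2 : MemLp (fun s => ‖g s‖) (ENNReal.ofReal 2) μ := by
    have : (ENNReal.ofReal 2) = 2 := by norm_num
    rw [this]
    exact (memLp_two_iff_integrable_sq hms).2 hI2
  have hg2 : MemLp (fun _ : ℝ => (1:ℝ)) (ENNReal.ofReal 2) μ := memLp_const 1
  have hpq : Real.HolderConjugate 2 2 := Real.HolderConjugate.two_two
  have hCS := integral_mul_le_Lp_mul_Lq_of_nonneg hpq
    (Filter.Eventually.of_forall fun s => norm_nonneg _)
    (Filter.Eventually.of_forall fun s => zero_le_one) hf2 hg2
  simp only [mul_one, Real.one_rpow] at hCS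
  -- translate Cauchy–Schwarz into interval integrals
  have hiv1 : ∫ s in (0:ℝ)..t, ‖g s‖ = ∫ s, ‖g s‖ ∂μ := intervalIntegral.integral_of_le ht0
  have hiv2 : ∫ s in (0:ℝ)..t, ‖g s‖^2 = ∫ s, ‖g s‖^2 ∂μ := intervalIntegral.integral_of_le ht0
  have hrp : ∀ s : ℝ, ‖g s‖ ^ (2:ℝ) = ‖g s‖ ^ 2 := fun s => by
    rw [show ((2:ℝ)) = ((2:ℕ):ℝ) by norm_num, Real.rpow_natCast]
  simp only [hrp] at hCS
  have hμuniv : ∫ s, (1:ℝ) ∂μ = t := by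
    rw [MeasureTheory.integral_const, smul_eq_mul, mul_one, hμ, measureReal_def, Measure.restrict_apply_univ,
      Real.volume_Ioc, ENNReal.toReal_ofReal (by linarith)]
    ring
  rw [hμuniv] at hCS
  have hI2nonneg : 0 ≤ ∫ s, ‖g s‖^2 ∂μ :=
    integral_nonneg fun s => sq_nonneg _
  have hkey : ‖γ t - γ 0‖ ≤ (∫ s, ‖g s‖^2 ∂μ) ^ ((1:ℝ)/2) * t ^ ((1:ℝ)/2) := by
    calc ‖γ t - γ 0‖ ≤ ∫ s in (0:ℝ)..t, ‖g s‖ := hb1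
      _ = ∫ s, ‖g s‖ ∂μ := hiv1
      _ ≤ _ := hCS
  have hEint : E (γ 0) - E (γ t) = ∫ s, ‖g s‖^2 ∂μ := by rw [eq3, hiv2]
  rw [hEint, Real.sqrt_mul ht0, Real.sqrt_eq_rpow, Real.sqrt_eq_rpow, mul_comm]
  exact hkey
end

section
/- Let H be a real inner product space, E : H → ℝ with E(x) ≥ 0 for all x ∈ H, T > 0, and let γ : ℝ → H solve the gradient flow of E on [0,T), with t ↦ ∇E(γ(t)) continuous on [0,T). Then γ is 1/2-Hölder continuous on [0,T) with constant √(E(γ(0))): for all 0 ≤ s ≤ t < T, ‖γ(t) − γ(s)‖ ≤ √(E(γ(s))) · √(t − s) ≤ √(E(γ(0))) · √(t − s). -/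
open Set

/-- Cauchy–Schwarz for interval integrals of continuous functions. -/
lemma cs_interval {f : ℝ → ℝ} {s t : ℝ} (hst : s ≤ t)
    (hf : ContinuousOn f (Icc s t)) :
    (∫ u in s..t, f u) ^ 2 ≤ (t - s) * ∫ u in s..t, (f u) ^ 2 := by
  set A : ℝ := ∫ u in s..t, f u with hA
  set L : ℝ := t - s with hL
  have hL0 : 0 ≤ L := sub_nonneg.2 hst
  have hf' : ContinuousOn f (uIcc s t) := by rwa [uIcc_of_le hst]
  have h2 : IntervalIntegrable f MeasureTheory.volume s t := hf'.intervalIntegrable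
  have h1 : IntervalIntegrable (fun u => (f u) ^ 2) MeasureTheory.volume s t :=
    (hf'.pow 2).intervalIntegrable
  have key : 0 ≤ ∫ u in s..t, (L * f u - A) ^ 2 :=
    intervalIntegral.integral_nonneg hst fun u _ => sq_nonneg _
  have expand : (fun u => (L * f u - A) ^ 2)
      = fun u => L ^ 2 * (f u) ^ 2 - (2 * L * A) * f u + A ^ 2 := by
    funext u; ring
  rw [expand] at key
  rw [intervalIntegral.integral_add (((h1.const_mul _).sub (h2.const_mul _)))
      (intervalIntegrable_const),
      intervalIntegral.integral_sub (h1.const_mul _) (h2.const_mul _),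
      intervalIntegral.integral_const_mul, intervalIntegral.integral_const_mul,
      intervalIntegral.integral_const, smul_eq_mul] at key
  rcases eq_or_lt_of_le hL0 with h | h
  · have hts : t = s := by simp only [hL] at h; linarith
    subst hts
    simp [hA]
  · nlinarith [key]

/-- Gradient flow trajectories of a nonnegative energy are `1/2`-Hölder
continuous with constant `√(E(γ 0))`. -/
theorem gradient_flow_holder
    {H : Type*} [NormedAddCommGroup H] [InnerProductSpace ℝ H] [CompleteSpace H]
    (E : H → ℝ) (hE : ∀ x, 0 ≤ E x) (T : ℝ) (hT : 0 < T) (γ : ℝ → H) (g : ℝ → H)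
    (hflow : ∀ t ∈ Ico (0 : ℝ) T,
      HasGradientAt E (g t) (γ t) ∧ HasDerivAt γ (-(g t)) t)
    (hcont : ContinuousOn g (Ico (0 : ℝ) T)) :
    ∀ s t : ℝ, 0 ≤ s → s ≤ t → t < T →
      ‖γ t - γ s‖ ≤ Real.sqrt (E (γ s)) * Real.sqrt (t - s) ∧
      Real.sqrt (E (γ s)) * Real.sqrt (t - s) ≤
        Real.sqrt (E (γ 0)) * Real.sqrt (t - s) := by
  -- derivative of the energy along the flow
  have hEderiv : ∀ u ∈ Ico (0 : ℝ) T,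
      HasDerivAt (fun r => E (γ r)) (-‖g u‖ ^ 2) u := by
    intro u hu
    obtain ⟨h1, h2⟩ := hflow u hu
    have hfd : HasFDerivAt E (InnerProductSpace.toDual ℝ H (g u)) (γ u) := h1
    have := hfd.comp_hasDerivAt u h2
    simp [InnerProductSpace.toDual_apply_apply, inner_neg_right,
      real_inner_self_eq_norm_sq] at this
    exact this
  -- fundamental theorem of calculus for the energy on subintervals
  have hEsub : ∀ a b : ℝ, 0 ≤ a → a ≤ b → b < T →
      E (γ b) - E (γ a) = ∫ u in a..b, -‖g u‖ ^ 2 := by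
    intro a b ha hab hbT
    have hsub : Icc a b ⊆ Ico 0 T := fun u hu => ⟨ha.trans hu.1, lt_of_le_of_lt hu.2 hbT⟩
    have hgc : ContinuousOn (fun u => -‖g u‖ ^ 2) (uIcc a b) := by
      rw [uIcc_of_le hab]
      exact (((hcont.mono hsub).norm.pow 2).neg)
    refine (intervalIntegral.integral_eq_sub_of_hasDerivAt (f := fun r => E (γ r)) ?_
      hgc.intervalIntegrable).symm
    intro u hu
    rw [uIcc_of_le hab] at hu
    exact hEderiv u (hsub hu)
  -- energy is nonincreasing along the flow
  have hmono : ∀ a b : ℝ, 0 ≤ a → a ≤ b → b < T → E (γ b) ≤ E (γ a) := by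
    intro a b ha hab hbT
    have h := hEsub a b ha hab hbT
    have hpos : 0 ≤ ∫ u in a..b, ‖g u‖ ^ 2 :=
      intervalIntegral.integral_nonneg hab fun u _ => sq_nonneg _
    rw [intervalIntegral.integral_neg] at h
    linarith
  intro s t hs hst htT
  have hsT : s < T := lt_of_le_of_lt hst htT
  have hsub : Icc s t ⊆ Ico 0 T := fun u hu => ⟨hs.trans hu.1, lt_of_le_of_lt hu.2 htT⟩
  have hgc : ContinuousOn g (Icc s t) := hcont.mono hsub
  have hgc' : ContinuousOn g (uIcc s t) := by rwa [uIcc_of_le hst]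
  -- FTC for γ
  have hγeq : γ t - γ s = ∫ u in s..t, -(g u) := by
    refine (intervalIntegral.integral_eq_sub_of_hasDerivAt ?_
      hgc'.neg.intervalIntegrable).symm
    intro u hu
    rw [uIcc_of_le hst] at hu
    exact (hflow u (hsub hu)).2
  -- bound the norm by the integral of the norm
  have hnorm : ‖γ t - γ s‖ ≤ ∫ u in s..t, ‖g u‖ := by
    rw [hγeq]
    calc ‖∫ u in s..t, -(g u)‖ ≤ ∫ u in s..t, ‖-(g u)‖ :=
          intervalIntegral.norm_integral_le_integral_norm hst
      _ = ∫ u in s..t, ‖g u‖ := by simp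
  -- Cauchy–Schwarz
  have hcs : (∫ u in s..t, ‖g u‖) ^ 2 ≤ (t - s) * ∫ u in s..t, ‖g u‖ ^ 2 :=
    cs_interval hst hgc.norm
  -- the integral of ‖g‖² is at most E (γ s)
  have hint : (∫ u in s..t, ‖g u‖ ^ 2) ≤ E (γ s) := by
    have h := hEsub s t hs hst htT
    have h2 : (∫ u in s..t, -‖g u‖ ^ 2) = -∫ u in s..t, ‖g u‖ ^ 2 := by
      simp [intervalIntegral.integral_neg]
    have hEt := hE (γ t)
    rw [h2] at h
    linarith
  have hts0 : 0 ≤ t - s := sub_nonneg.2 hst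
  have hES : 0 ≤ E (γ s) := hE _
  have hintnn : 0 ≤ ∫ u in s..t, ‖g u‖ :=
    intervalIntegral.integral_nonneg hst fun u _ => norm_nonneg _
  constructor
  · have hle : (∫ u in s..t, ‖g u‖) ^ 2 ≤ E (γ s) * (t - s) := by
      nlinarith
    have : (∫ u in s..t, ‖g u‖) ≤ Real.sqrt (E (γ s) * (t - s)) :=
      Real.le_sqrt_of_sq_le hle
    calc ‖γ t - γ s‖ ≤ ∫ u in s..t, ‖g u‖ := hnorm
      _ ≤ Real.sqrt (E (γ s) * (t - s)) := this
      _ = Real.sqrt (E (γ s)) * Real.sqrt (t - s) := Real.sqrt_mul hES _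
  · apply mul_le_mul_of_nonneg_right _ (Real.sqrt_nonneg _)
    exact Real.sqrt_le_sqrt (hmono 0 s le_rfl hs hsT)
end

section
/- Let H be a complete real inner product space, E : H → ℝ with E(x) ≥ 0 for all x ∈ H, let 0 < T < ∞, and let γ : ℝ → H solve the gradient flow of E on [0,T), with t ↦ ∇E(γ(t)) continuous on [0,T). Then γ has a limit at the final time: there exists L ∈ H such that γ(t) → L as t → T from the left. -/
open Set Filter Topology MeasureTheory

/-- No blowup at the maximal time: a gradient flow trajectory of a nonnegative
energy in a Hilbert space has a limit as `t → T⁻`. -/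
theorem gradient_flow_limit_at_final_time
    {H : Type*} [NormedAddCommGroup H] [InnerProductSpace ℝ H] [CompleteSpace H]
    (E : H → ℝ) (hE : ∀ x, 0 ≤ E x) (T : ℝ) (hT : 0 < T) (γ : ℝ → H) (g : ℝ → H)
    (hflow : ∀ t ∈ Ico (0 : ℝ) T,
      HasGradientAt E (g t) (γ t) ∧ HasDerivAt γ (-(g t)) t)
    (hcont : ContinuousOn g (Ico (0 : ℝ) T)) :
    ∃ L : H, Tendsto γ (𝓝[<] T) (𝓝 L) := by
  set f : ℝ → ℝ := fun t => E (γ t) with hfdef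
  have hfderiv : ∀ t ∈ Ico (0:ℝ) T, HasDerivAt f (-‖g t‖^2) t := by
    intro t ht
    have h1 := (hflow t ht).1.hasFDerivAt
    have h2 := (hflow t ht).2
    have h3 := h1.comp_hasDerivAt t h2
    convert h3 using 1
    · rfl
    · rfl
    · rfl
    simp [InnerProductSpace.toDual_apply_apply, inner_neg_right,
      real_inner_self_eq_norm_sq]
  have hgsqcont : ContinuousOn (fun u => ‖g u‖^2) (Ico (0:ℝ) T) :=
    (hcont.norm).pow 2
  have key : ∀ s t : ℝ, 0 ≤ s → s ≤ t → t < T →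
      f s - f t = (∫ u in s..t, ‖g u‖^2) ∧
      ‖γ t - γ s‖ ≤ (t - s)/2 + (f s - f t)/2 := by
    intro s t hs hst htT
    have hsub : uIcc s t ⊆ Ico (0:ℝ) T := by
      rw [uIcc_of_le hst]
      exact fun u hu => ⟨hs.trans hu.1, lt_of_le_of_lt hu.2 htT⟩
    have hgc : ContinuousOn g (uIcc s t) := hcont.mono hsub
    have hgsqc : ContinuousOn (fun u => ‖g u‖^2) (uIcc s t) := hgsqcont.mono hsub
    have hint1 : IntervalIntegrable (fun u => -(g u)) volume s t :=
      (hgc.neg).intervalIntegrable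
    have hint2 : IntervalIntegrable (fun u => -‖g u‖^2) volume s t :=
      (hgsqc.neg).intervalIntegrable
    have hint3 : IntervalIntegrable (fun u => ‖g u‖^2) volume s t :=
      hgsqc.intervalIntegrable
    have hγeq : (∫ u in s..t, -(g u)) = γ t - γ s :=
      intervalIntegral.integral_eq_sub_of_hasDerivAt
        (fun u hu => (hflow u (hsub hu)).2) hint1
    have hfeq : (∫ u in s..t, -‖g u‖^2) = f t - f s :=
      intervalIntegral.integral_eq_sub_of_hasDerivAt
        (fun u hu => hfderiv u (hsub hu)) hint2
    have hfs : f s - f t = (∫ u in s..t, ‖g u‖^2) := by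
      rw [intervalIntegral.integral_neg] at hfeq
      linarith
    refine ⟨hfs, ?_⟩
    calc ‖γ t - γ s‖ = ‖∫ u in s..t, -(g u)‖ := by rw [hγeq]
      _ ≤ ∫ u in s..t, ‖-(g u)‖ :=
          intervalIntegral.norm_integral_le_integral_norm hst
      _ = ∫ u in s..t, ‖g u‖ := by simp
      _ ≤ ∫ u in s..t, (1 + ‖g u‖^2)/2 := by
          apply intervalIntegral.integral_mono_on hst
          · exact (hgc.norm).intervalIntegrable
          · exact ((continuousOn_const.add hgsqc).div_const 2).intervalIntegrable
          · intro u _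
            nlinarith [norm_nonneg (g u), sq_nonneg (‖g u‖ - 1)]
      _ = (t - s)/2 + (f s - f t)/2 := by
          rw [intervalIntegral.integral_div,
            intervalIntegral.integral_add intervalIntegrable_const hint3, ← hfs]
          simp
          ring
  have fanti : ∀ s t : ℝ, 0 ≤ s → s ≤ t → t < T → f t ≤ f s := by
    intro s t hs hst htT
    have h := (key s t hs hst htT).1
    have h2 : 0 ≤ ∫ u in s..t, ‖g u‖^2 :=
      intervalIntegral.integral_nonneg hst (fun u _ => sq_nonneg _)
    linarith
  have hcauchy : Cauchy (map γ (𝓝[<] T)) := by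
    rw [Metric.cauchy_iff]
    refine ⟨map_neBot, ?_⟩
    intro ε hε
    set a : ℝ := max (T - ε/2) 0 with ha
    have haT : a < T := max_lt (by linarith) hT
    have ha0 : 0 ≤ a := le_max_right _ _
    have haTε : T - a ≤ ε/2 := by
      have : T - ε/2 ≤ a := le_max_left _ _
      linarith
    set S := f '' Ico a T with hS
    have hSne : S.Nonempty := ⟨f a, ⟨a, ⟨le_refl a, haT⟩, rfl⟩⟩
    have hSbdd : BddBelow S := by
      refine ⟨0, ?_⟩
      rintro x ⟨u, -, rfl⟩
      exact hE (γ u)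
    obtain ⟨x, ⟨s, hsmem, rfl⟩, hxlt⟩ :=
      exists_lt_of_csInf_lt hSne
        (lt_add_of_pos_right (sInf S) (by linarith : (0:ℝ) < ε/2))
    refine ⟨γ '' Ioo s T, image_mem_map (Ioo_mem_nhdsLT hsmem.2), ?_⟩
    have main : ∀ u v : ℝ, u ∈ Ioo s T → v ∈ Ioo s T → u ≤ v →
        dist (γ u) (γ v) < ε := by
      intro u v hu hv huv
      have hs0 : 0 ≤ s := ha0.trans hsmem.1
      have hu0 : 0 ≤ u := hs0.trans hu.1.le
      have estim := (key u v hu0 huv hv.2).2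
      have hfu : f u ≤ f s := fanti s u hs0 hu.1.le hu.2
      have hav : a ≤ v := hsmem.1.trans (hu.1.le.trans huv)
      have hfv : sInf S ≤ f v := csInf_le hSbdd ⟨v, ⟨hav, hv.2⟩, rfl⟩
      have hvu : v - u ≤ ε / 2 := by
        have : a ≤ u := hsmem.1.trans hu.1.le
        have := hv.2
        linarith
      have hdist : dist (γ u) (γ v) = ‖γ v - γ u‖ := by
        rw [dist_eq_norm, norm_sub_rev]
      rw [hdist]
      linarith
    rintro x ⟨u, hu, rfl⟩ y ⟨v, hv, rfl⟩
    rcases le_total u v with h | h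
    · exact main u v hu hv h
    · rw [dist_comm]; exact main v u hv hu h
  obtain ⟨L, hL⟩ := CompleteSpace.complete hcauchy
  exact ⟨L, hL⟩
end

section
/- Let E be a finite-dimensional real inner product space and let f : E → ℝ be differentiable everywhere with f(x) ≥ 0 for all x ∈ E. Assume the gradient map x ↦ ∇f(x) is locally Lipschitz (every point of E has a neighborhood on which it is Lipschitz). Then the gradient flow of f admits a global forward solution: for every x₀ ∈ E there exists γ : ℝ → E with γ(0) = x₀ such that for every t ≥ 0, γ has derivative −∇f(γ(t)) at t. -/
open Set Gradient

open Metric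


lemma LocallyLipschitz.exists_lipschitzOnWith_of_isCompact
    {E : Type*} [NormedAddCommGroup E] {f : E → E}
    (hf : LocallyLipschitz f) {s : Set E} (hs : IsCompact s) :
    ∃ K : NNReal, LipschitzOnWith K f s := by
  rcases s.eq_empty_or_nonempty with rfl | ⟨x₀, hx₀⟩
  · exact ⟨1, by simp⟩
  have hcont : Continuous f := hf.continuous
  choose K t ht hlipt using hf
  choose r hr hball using fun x => Metric.mem_nhds_iff.mp (ht x)
  obtain ⟨F, hFs, hFcov⟩ := hs.elim_nhds_subcover (fun x => Metric.ball x (r x / 2))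
    (fun x _ => Metric.ball_mem_nhds x (by linarith [hr x]))
  have hFne : F.Nonempty := by
    rcases mem_iUnion₂.mp (hFcov hx₀) with ⟨c, hc, _⟩
    exact ⟨c, hc⟩
  set δ : ℝ := F.inf' hFne (fun x => r x / 2) with hδdef
  have hδpos : 0 < δ := by
    rw [hδdef, Finset.lt_inf'_iff]
    exact fun i _ => by linarith [hr i]
  obtain ⟨D, hD⟩ := isBounded_iff.mp (hs.image hcont).isBounded
  have hDnn : 0 ≤ D := by
    have := hD (mem_image_of_mem f hx₀) (mem_image_of_mem f hx₀)
    simpa using this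
  refine ⟨F.sup K + Real.toNNReal (D / δ), lipschitzOnWith_iff_dist_le_mul.mpr ?_⟩
  intro x hx y hy
  rcases lt_or_ge (dist x y) δ with hlt | hge
  · rcases mem_iUnion₂.mp (hFcov hx) with ⟨c, hcF, hxc⟩
    have hδc : δ ≤ r c / 2 := Finset.inf'_le _ hcF
    have hxc' : x ∈ t c := hball c (by
      have := mem_ball.mp hxc; exact mem_ball.mpr (by linarith))
    have hyc : y ∈ t c := hball c (by
      have h1 := mem_ball.mp hxc
      have : dist y c ≤ dist y x + dist x c := dist_triangle _ _ _
      rw [dist_comm y x] at this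
      exact mem_ball.mpr (by linarith))
    have := lipschitzOnWith_iff_dist_le_mul.mp (hlipt c) x hxc' y hyc
    refine this.trans (mul_le_mul_of_nonneg_right ?_ dist_nonneg)
    have : K c ≤ F.sup K := Finset.le_sup hcF
    calc (K c : ℝ) ≤ (F.sup K : NNReal) := by exact_mod_cast this
      _ ≤ _ := by
        push_cast
        linarith [(Real.toNNReal (D / δ)).coe_nonneg]
  · have h1 : dist (f x) (f y) ≤ D := hD (mem_image_of_mem f hx) (mem_image_of_mem f hy)
    have h2 : D ≤ (D / δ) * dist x y := by
      rw [div_mul_eq_mul_div, le_div_iff₀ hδpos]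
      exact mul_le_mul_of_nonneg_left hge hDnn
    have h3 : (D / δ) ≤ ((F.sup K + Real.toNNReal (D / δ) : NNReal) : ℝ) := by
      push_cast
      have : (D / δ) ≤ (Real.toNNReal (D / δ) : ℝ) := Real.le_coe_toNNReal _
      have h4 : (0:ℝ) ≤ (F.sup K : NNReal) := (F.sup K).coe_nonneg
      linarith
    exact h1.trans (h2.trans (mul_le_mul_of_nonneg_right h3 dist_nonneg))

lemma energy_estimate {E : Type*} [NormedAddCommGroup E] [InnerProductSpace ℝ E]
    [FiniteDimensional ℝ E]
    (f : E → ℝ) (hdiff : Differentiable ℝ f) (hpos : ∀ x, 0 ≤ f x)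
    {x₀ : E} {a : ℝ} {γ : ℝ → E} (hγ0 : γ 0 = x₀)
    (hsol : ∀ t ∈ Icc 0 a, HasDerivWithinAt γ (-(gradient f (γ t))) (Icc 0 a) t) :
    ∀ t ∈ Icc 0 a, ‖γ t - x₀‖ ≤ (f x₀ + t) / 2 := by
  have hIci : ∀ t ∈ Ico 0 a, HasDerivWithinAt γ (-(gradient f (γ t))) (Ici t) t := by
    intro t ht
    refine (hsol t ⟨ht.1, ht.2.le⟩).mono_of_mem_nhdsWithin ?_
    refine mem_nhdsWithin.mpr ⟨Iio a, isOpen_Iio, ht.2, ?_⟩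
    exact fun s hs => ⟨le_trans ht.1 hs.2, le_of_lt hs.1⟩
  have hγcont : ContinuousOn γ (Icc 0 a) := fun t ht => (hsol t ht).continuousWithinAt
  set B : ℝ → ℝ := fun t => (f x₀ - f (γ t) + t) / 2 with hBdef
  have key : ∀ t ∈ Icc (0:ℝ) a, ‖γ t - x₀‖ ≤ B t := by
    refine fun t ht => image_norm_le_of_norm_deriv_right_le_deriv_boundary'
      (f := fun s => γ s - x₀) (f' := fun s => -(gradient f (γ s)))
      (fun s hs => ((hsol s hs).continuousWithinAt).sub continuousWithinAt_const)
      (fun s hs => (hIci s hs).sub_const x₀)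
      (by simp [hBdef, hγ0])
      (((continuousOn_const.sub (hdiff.continuous.comp_continuousOn hγcont)).add
        continuousOn_id).div_const 2)
      (B' := fun s => (1 + ‖gradient f (γ s)‖^2)/2) ?_ ?_ ht
    · intro s hs
      have hγd := hIci s hs
      have h1 : HasFDerivAt f (InnerProductSpace.toDual ℝ E (gradient f (γ s))) (γ s) :=
        (hdiff (γ s)).hasGradientAt.hasFDerivAt
      have hfd : HasDerivWithinAt (fun u => f (γ u)) (-(‖gradient f (γ s)‖^2)) (Ici s) s := by
        have := h1.comp_hasDerivWithinAt s hγd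
        simp [InnerProductSpace.toDual_apply_apply, inner_neg_right, -toDual_gradient,
          real_inner_self_eq_norm_sq] at this
        exact this
      have h2 : HasDerivWithinAt (fun u => (f x₀ - f (γ u) + u) / 2)
          ((0 - -‖gradient f (γ s)‖ ^ 2 + 1) / 2) (Ici s) s := (((hasDerivWithinAt_const s (Ici s) (f x₀)).sub hfd).add
        (hasDerivWithinAt_id s (Ici s))).div_const 2
      exact h2.congr_deriv (by ring)
    · intro s _
      rw [norm_neg]
      nlinarith [sq_nonneg (‖gradient f (γ s)‖ - 1), norm_nonneg (gradient f (γ s))]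
  intro t ht
  have := key t ht
  have h2 := hpos (γ t)
  rw [hBdef] at this
  simp only at this
  linarith

lemma pl_step {E : Type*} [NormedAddCommGroup E] [InnerProductSpace ℝ E]
    [FiniteDimensional ℝ E]
    (g : E → E) {x₀ : E} {ρ : ℝ} {L : NNReal} {M : ℝ}
    (hL : LipschitzOnWith L g (closedBall x₀ (ρ + 1)))
    (hM : ∀ x ∈ closedBall x₀ (ρ + 1), ‖g x‖ ≤ M) (hM1 : 1 ≤ M)
    {y : E} (hy : y ∈ closedBall x₀ ρ) (t₀ : ℝ) :
    ∃ σ : ℝ → E, σ t₀ = y ∧ ∀ t ∈ Icc (t₀ - 1/M) (t₀ + 1/M),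
      HasDerivWithinAt σ (-(g (σ t))) (Icc (t₀ - 1/M) (t₀ + 1/M)) t := by
  have hM0 : (0:ℝ) < M := lt_of_lt_of_le one_pos hM1
  have hsub : closedBall y 1 ⊆ closedBall x₀ (ρ + 1) := by
    refine closedBall_subset_closedBall' ?_
    have := mem_closedBall.mp hy
    linarith
  have hpl : IsPicardLindelof (fun _ x => -(g x)) (tmin := t₀ - 1/M) (tmax := t₀ + 1/M)
      ⟨t₀, by constructor <;> linarith [one_div_pos.mpr hM0]⟩ y 1 0 M.toNNReal L :=
    { lipschitzOnWith := fun t _ => by rw [NNReal.coe_one]; exact ((hL.mono hsub).neg)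
      continuousOn := fun x _ => continuousOn_const
      norm_le := fun t _ x hx => by
        rw [norm_neg, Real.coe_toNNReal _ hM0.le]; exact hM x (hsub (by simpa using hx))
      mul_max_le := by
        show (M.toNNReal:ℝ) * max ((t₀ + 1/M) - t₀) (t₀ - (t₀ - 1/M)) ≤ ((1:NNReal):ℝ) - ((0:NNReal):ℝ)
        rw [add_sub_cancel_left, sub_sub_cancel, max_self, Real.coe_toNNReal _ hM0.le,
          NNReal.coe_one, NNReal.coe_zero, sub_zero, mul_one_div, div_self (ne_of_gt hM0)] }
  obtain ⟨σ, hσ0, hσ⟩ := hpl.exists_eq_forall_mem_Icc_hasDerivWithinAt₀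
  exact ⟨σ, hσ0, hσ⟩

lemma sol_on_Icc {E : Type*} [NormedAddCommGroup E] [InnerProductSpace ℝ E]
    [FiniteDimensional ℝ E]
    (f : E → ℝ) (hdiff : Differentiable ℝ f) (hpos : ∀ x, 0 ≤ f x)
    (hlip : LocallyLipschitz (fun x => gradient f x)) (x₀ : E) (n : ℕ) :
    ∃ δ : ℝ, 0 < δ ∧ ∃ γ : ℝ → E, γ 0 = x₀ ∧
      ∀ t ∈ Icc (-δ) (n:ℝ), HasDerivAt γ (-(gradient f (γ t))) t := by
  set g : E → E := fun x => gradient f x with hgdef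
  set T : ℝ := (n:ℝ) with hTdef
  have hT0 : 0 ≤ T := Nat.cast_nonneg n
  set ρ : ℝ := (f x₀ + T) / 2 with hρdef
  have hρ0 : 0 ≤ ρ := by have := hpos x₀; rw [hρdef]; linarith
  obtain ⟨L, hL⟩ := hlip.exists_lipschitzOnWith_of_isCompact
    (isCompact_closedBall x₀ (ρ + 1))
  obtain ⟨C, hC⟩ := (isCompact_closedBall x₀ (ρ + 1)).exists_bound_of_continuousOn
    hlip.continuous.continuousOn
  set M : ℝ := max C 1 with hMdef
  have hM1 : 1 ≤ M := le_max_right _ _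
  have hM0 : (0:ℝ) < M := lt_of_lt_of_le one_pos hM1
  have hMbound : ∀ x ∈ closedBall x₀ (ρ + 1), ‖g x‖ ≤ M :=
    fun x hx => (hC x hx).trans (le_max_left _ _)
  set ε : ℝ := 1 / M with hεdef
  have hε0 : 0 < ε := one_div_pos.mpr hM0
  set N : ℕ := ⌊T / ε⌋₊ + 1 with hNdef
  have hNε : T < (N:ℝ) * ε := by
    have h1 : T / ε < (N:ℝ) := by
      rw [hNdef]; push_cast; exact Nat.lt_floor_add_one _
    calc T = (T / ε) * ε := by field_simp
      _ < (N:ℝ) * ε := by exact mul_lt_mul_of_pos_right h1 hε0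
  have hkT : ∀ k : ℕ, k < N → (k:ℝ) * ε ≤ T := by
    intro k hk
    have h1 : (k:ℝ) ≤ ⌊T / ε⌋₊ := by exact_mod_cast Nat.lt_succ_iff.mp hk
    have h2 : (⌊T / ε⌋₊:ℝ) ≤ T / ε := Nat.floor_le (by positivity)
    calc (k:ℝ) * ε ≤ (T / ε) * ε := mul_le_mul_of_nonneg_right (h1.trans h2) hε0.le
      _ = T := by field_simp
  have main : ∀ k : ℕ, k ≤ N → ∃ γ : ℝ → E, γ 0 = x₀ ∧
      ∀ t ∈ Icc (-ε) ((k:ℝ)*ε), HasDerivWithinAt γ (-(g (γ t))) (Icc (-ε) ((k:ℝ)*ε)) t := by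
    intro k
    induction k with
    | zero =>
      intro _
      have hy : x₀ ∈ closedBall x₀ ρ := mem_closedBall_self hρ0
      obtain ⟨σ, hσ0, hσ⟩ := pl_step g hL hMbound hM1 hy 0
      refine ⟨σ, hσ0, ?_⟩
      intro t ht
      push_cast at ht ⊢
      rw [zero_mul] at ht ⊢
      have hsub : Icc (-ε) (0:ℝ) ⊆ Icc (0 - 1/M) (0 + 1/M) := by
        apply Icc_subset_Icc <;> simp [hεdef] <;> linarith [hε0]
      exact (hσ t (hsub ht)).mono hsub
    | succ k ih =>
      intro hk1
      obtain ⟨γ, hγ0, hγ⟩ := ih (Nat.le_of_succ_le hk1)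
      set a : ℝ := (k:ℝ) * ε with hadef
      have ha0 : 0 ≤ a := by positivity
      have haT : a ≤ T := hkT k (Nat.lt_of_succ_le hk1)
      have hres : ∀ t ∈ Icc 0 a, HasDerivWithinAt γ (-(gradient f (γ t))) (Icc 0 a) t := by
        intro t ht
        exact (hγ t ⟨by linarith [ht.1, hε0], ht.2⟩).mono (Icc_subset_Icc_left (by linarith))
      have hball : γ a ∈ closedBall x₀ ρ := by
        have := energy_estimate f hdiff hpos hγ0 hres a ⟨ha0, le_rfl⟩
        rw [mem_closedBall, dist_eq_norm]
        calc ‖γ a - x₀‖ ≤ (f x₀ + a) / 2 := this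
          _ ≤ ρ := by rw [hρdef]; linarith
      obtain ⟨σ, hσ0, hσ⟩ := pl_step g hL hMbound hM1 hball a
      have hεM : 1 / M = ε := rfl
      rw [hεM] at hσ
      set b : ℝ := ((k+1:ℕ):ℝ) * ε with hbdef
      have hb : b = a + ε := by rw [hbdef, hadef]; push_cast; ring
      set γ' : ℝ → E := fun t => if t ≤ a then γ t else σ t with hγ'def
      have hEq1 : EqOn γ' γ (Iic a) := fun s hs => if_pos hs
      have hEq2 : EqOn γ' σ (Ici a) := by
        intro s hs
        rcases le_or_gt s a with h | h
        · have : s = a := le_antisymm h hs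
          subst this
          simp only [hγ'def, if_pos le_rfl, hσ0]
        · exact if_neg (not_le.mpr h)
      refine ⟨γ', by rw [hEq1 (mem_Iic.mpr ha0), hγ0], ?_⟩
      intro t ht
      have hvt : γ' t = if t ≤ a then γ t else σ t := rfl
      rcases lt_trichotomy t a with h | h | h
      · -- t < a
        have h1 : HasDerivWithinAt γ (-(g (γ t))) (Icc (-ε) b) t := by
          refine (hγ t ⟨ht.1, h.le⟩).mono_of_mem_nhdsWithin ?_
          refine mem_nhdsWithin.mpr ⟨Iio a, isOpen_Iio, h, ?_⟩
          exact fun s hs => ⟨hs.2.1, hs.1.le⟩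
        have h2 : γ' =ᶠ[nhdsWithin t (Icc (-ε) b)] γ :=
          Filter.eventuallyEq_of_mem (mem_nhdsWithin_of_mem_nhds (Iio_mem_nhds h))
            (fun s hs => hEq1 (le_of_lt (mem_Iio.mp hs)))
        have h3 : γ' t = γ t := hEq1 h.le
        rw [show (-(g (γ' t))) = (-(g (γ t))) by rw [h3]]
        exact h1.congr_of_eventuallyEq h2 h3
      · -- t = a
        subst h
        have hval : γ' a = γ a := hEq1 (mem_Iic.mpr le_rfl)
        have hleft : HasDerivWithinAt γ' (-(g (γ' a))) (Icc (-ε) a) a := by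
          have h1 : HasDerivWithinAt γ (-(g (γ a))) (Icc (-ε) a) a :=
            hγ a ⟨by linarith [hε0], le_rfl⟩
          rw [show (-(g (γ' a))) = (-(g (γ a))) by rw [hval]]
          exact h1.congr (fun s hs => hEq1 hs.2) hval
        have hright : HasDerivWithinAt γ' (-(g (γ' a))) (Icc a b) a := by
          have h1 : HasDerivWithinAt σ (-(g (σ a))) (Icc a b) a := by
            refine (hσ a ⟨by linarith [hε0], by linarith [hε0]⟩).mono ?_
            apply Icc_subset_Icc (by linarith [hε0]) (le_of_eq hb)
          have hvalσ : γ' a = σ a := hEq2 (mem_Ici.mpr le_rfl)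
          rw [show (-(g (γ' a))) = (-(g (σ a))) by rw [hvalσ]]
          exact h1.congr (fun s hs => hEq2 hs.1) hvalσ
        have := hleft.union hright
        rwa [Icc_union_Icc_eq_Icc (by linarith [hε0]) (by rw [hb]; linarith [hε0])] at this
      · -- t > a
        have h1 : HasDerivWithinAt σ (-(g (σ t))) (Icc (-ε) b) t := by
          have htb : t ≤ b := ht.2
          refine (hσ t ⟨by linarith [hε0, ht.1], by rw [hb] at htb; linarith⟩).mono_of_mem_nhdsWithin ?_
          refine mem_nhdsWithin.mpr ⟨Ioi a, isOpen_Ioi, h, ?_⟩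
          intro s hs
          have hs1 : a < s := hs.1
          have hs2 : s ≤ b := hs.2.2
          rw [hb] at hs2
          exact ⟨by linarith, by linarith⟩
        have h2 : γ' =ᶠ[nhdsWithin t (Icc (-ε) b)] σ :=
          Filter.eventuallyEq_of_mem (mem_nhdsWithin_of_mem_nhds (Ioi_mem_nhds h))
            (fun s hs => hEq2 (le_of_lt (mem_Ioi.mp hs)))
        have h3 : γ' t = σ t := hEq2 h.le
        rw [show (-(g (γ' t))) = (-(g (σ t))) by rw [h3]]
        exact h1.congr_of_eventuallyEq h2 h3
  obtain ⟨γ, hγ0, hγ⟩ := main N le_rfl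
  refine ⟨ε/2, by linarith, γ, hγ0, ?_⟩
  intro t ht
  have h1 : t ∈ Icc (-ε) ((N:ℝ)*ε) := ⟨by linarith [ht.1], le_trans ht.2 (le_of_lt hNε)⟩
  exact (hγ t h1).hasDerivAt (Icc_mem_nhds (by linarith [ht.1]) (lt_of_le_of_lt ht.2 hNε))

/-- Global existence of the gradient flow of a nonnegative function with
locally Lipschitz gradient on a finite-dimensional inner product space. -/
theorem gradient_flow_global_existence
    {E : Type*} [NormedAddCommGroup E] [InnerProductSpace ℝ E]
    [FiniteDimensional ℝ E]
    (f : E → ℝ) (hdiff : Differentiable ℝ f) (hpos : ∀ x, 0 ≤ f x)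
    (hlip : LocallyLipschitz (fun x => gradient f x)) :
    ∀ x₀ : E, ∃ γ : ℝ → E, γ 0 = x₀ ∧
      ∀ t : ℝ, 0 ≤ t → HasDerivAt γ (-(gradient f (γ t))) t := by
  intro x₀
  choose δ hδ Γ hΓ0 hΓ using fun n => sol_on_Icc f hdiff hpos hlip x₀ n
  have agree : ∀ m n : ℕ, 1 ≤ m → 1 ≤ n → ∀ s : ℝ,
      -(min (δ m) (δ n)) ≤ s → s ≤ min (m:ℝ) (n:ℝ) → Γ m s = Γ n s := by
    intro m n hm hn
    set a : ℝ := -(min (δ m) (δ n)) with hadef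
    set b : ℝ := min (m:ℝ) (n:ℝ) with hbdef
    have ham : -(δ m) ≤ a := by rw [hadef]; linarith [min_le_left (δ m) (δ n)]
    have han : -(δ n) ≤ a := by rw [hadef]; linarith [min_le_right (δ m) (δ n)]
    have hbm : b ≤ (m:ℝ) := min_le_left _ _
    have hbn : b ≤ (n:ℝ) := min_le_right _ _
    have hsubm : Icc a b ⊆ Icc (-(δ m)) (m:ℝ) := Icc_subset_Icc ham hbm
    have hsubn : Icc a b ⊆ Icc (-(δ n)) (n:ℝ) := Icc_subset_Icc han hbn
    have hcontm : ContinuousOn (Γ m) (Icc a b) :=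
      continuousOn_of_forall_continuousAt (fun t ht => (hΓ m t (hsubm ht)).continuousAt)
    have hcontn : ContinuousOn (Γ n) (Icc a b) :=
      continuousOn_of_forall_continuousAt (fun t ht => (hΓ n t (hsubn ht)).continuousAt)
    set K' : Set E := Γ m '' Icc a b ∪ Γ n '' Icc a b with hK'def
    have hK'c : IsCompact K' :=
      (isCompact_Icc.image_of_continuousOn hcontm).union
        (isCompact_Icc.image_of_continuousOn hcontn)
    obtain ⟨K, hK⟩ := hlip.exists_lipschitzOnWith_of_isCompact hK'c
    have h0ab : (0:ℝ) ∈ Ioo a b := by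
      constructor
      · rw [hadef]; linarith [lt_min (hδ m) (hδ n)]
      · rw [hbdef]; exact lt_min (by exact_mod_cast hm) (by exact_mod_cast hn)
    have key := ODE_solution_unique_of_mem_Icc
      (v := fun _ x => -(gradient f x)) (s := fun _ => K') (K := K)
      (fun _ _ => hK.neg) h0ab hcontm
      (fun t ht => hΓ m t (hsubm (Ioo_subset_Icc_self ht)))
      (fun t ht => mem_union_left _ (mem_image_of_mem _ (Ioo_subset_Icc_self ht)))
      hcontn
      (fun t ht => hΓ n t (hsubn (Ioo_subset_Icc_self ht)))
      (fun t ht => mem_union_right _ (mem_image_of_mem _ (Ioo_subset_Icc_self ht)))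
      ((hΓ0 m).trans (hΓ0 n).symm)
    intro s hs1 hs2
    exact key ⟨hs1, hs2⟩
  refine ⟨fun t => Γ (⌈t⌉₊ + 2) t, by show Γ (⌈(0:ℝ)⌉₊ + 2) (0:ℝ) = x₀; rw [Nat.ceil_zero]; exact hΓ0 2, ?_⟩
  intro t ht
  set n : ℕ := ⌈t⌉₊ + 2 with hndef
  have htn : t ∈ Icc (-(δ n)) (n:ℝ) := by
    constructor
    · linarith [hδ n]
    · push_cast [hndef]; linarith [Nat.le_ceil t]
  have hd : HasDerivAt (Γ n) (-(gradient f (Γ n t))) t := hΓ n t htn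
  set η : ℝ := min 1 (min (δ n) (δ 2)) with hηdef
  have hη0 : 0 < η := lt_min one_pos (lt_min (hδ n) (hδ 2))
  have hη1 : η ≤ 1 := min_le_left _ _
  have hηn : η ≤ δ n := (min_le_right _ _).trans (min_le_left _ _)
  have hη2 : η ≤ δ 2 := (min_le_right _ _).trans (min_le_right _ _)
  have heq : (fun s => Γ (⌈s⌉₊ + 2) s) =ᶠ[nhds t] Γ n := by
    filter_upwards [Ioo_mem_nhds (by linarith : t - η < t) (by linarith : t < t + η)] with s hs
    rcases le_or_gt 0 s with hs0 | hs0
    · refine agree (⌈s⌉₊ + 2) n (by omega) (by omega) s ?_ ?_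
      · have : 0 < min (δ (⌈s⌉₊ + 2)) (δ n) := lt_min (hδ _) (hδ _)
        linarith
      · refine le_min ?_ ?_
        · push_cast; linarith [Nat.le_ceil s]
        · have h1 : s < t + η := hs.2
          have h2 : t ≤ (⌈t⌉₊:ℝ) := Nat.le_ceil t
          push_cast [hndef]; linarith
    · have hceil : ⌈s⌉₊ = 0 := Nat.ceil_eq_zero.mpr hs0.le
      rw [hceil]
      refine agree 2 n (by omega) (by omega) s ?_ ?_
      · have h1 : t - η < s := hs.1
        have h2 : min (δ 2) (δ n) = min (δ n) (δ 2) := min_comm _ _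
        have h3 : η ≤ min (δ 2) (δ n) := by rw [h2]; exact le_min hηn hη2
        linarith
      · exact le_trans hs0.le (le_min (by norm_num) (by positivity))
  have hfin := hd.congr_of_eventuallyEq heq
  exact hfin
end
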